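/- Let Φ be an m×N random matrix satisfying the distributional JL property: for any fixed x ∈ ℝᴺ and 0 < ε < 1, Pr[|‖Φx‖₂² − ‖x‖₂²| > ε‖x‖₂²] ≤ 2e^{−m f(ε)} with f(ε) > 0. Let 𝒳 be a k-dimensional subspace of ℝᴺ, and suppose m ≥ (k log(42/ε) + log(2/δ)) / f(ε/√2). Then with probability at least 1 − δ, √(1−ε)‖x‖₂ ≤ ‖Φx‖₂ ≤ √(1+ε)‖x‖₂ for all x ∈ 𝒳. -/

import Mathlib

set_option maxHeartbeats 1000000
open MeasureTheory Metric
open scoped Matrix ENNReal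


lemma jl_packing (k : ℕ) (a : ℝ) (ha : 0 < a) (ha1 : a ≤ 1)
    (T : Finset (EuclideanSpace ℝ (Fin k)))
    (hT : ∀ q ∈ T, ‖q‖ ≤ 1)
    (hsep : ∀ q ∈ T, ∀ q' ∈ T, q ≠ q' → a < dist q q') :
    (T.card : ℝ) ≤ (3 / a) ^ k := by
  have h3a : (1:ℝ) ≤ 3 / a := by
    rw [le_div_iff₀ ha]; linarith
  rcases Nat.eq_zero_or_pos k with rfl | hk
  · simpa using (Finset.card_le_one.mpr (fun x _ y _ => Subsingleton.elim x y) : T.card ≤ 1)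
  haveI : Nonempty (Fin k) := ⟨⟨0, hk⟩⟩
  haveI : Nontrivial (EuclideanSpace ℝ (Fin k)) := inferInstance
  have hdisj : (T : Set (EuclideanSpace ℝ (Fin k))).PairwiseDisjoint (fun q => ball q (a/2)) := by
    intro q hq q' hq' hne
    exact ball_disjoint_ball (by have := hsep q hq q' hq' hne; linarith)
  have hmeas : ∀ q ∈ T, MeasurableSet (ball q (a/2)) := fun q _ => measurableSet_ball
  have hsub : (⋃ q ∈ T, ball q (a/2)) ⊆ ball (0:EuclideanSpace ℝ (Fin k)) (1 + a/2) := by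
    intro x hx
    simp only [Set.mem_iUnion] at hx
    obtain ⟨q, hq, hxq⟩ := hx
    have := hT q hq
    simp only [mem_ball] at hxq ⊢
    have h1 : dist q 0 ≤ 1 := by rwa [dist_zero_right]
    calc dist x 0 ≤ dist x q + dist q 0 := dist_triangle _ _ _
      _ < a/2 + 1 := by linarith
      _ = 1 + a/2 := by ring
  have hrank : Module.finrank ℝ (EuclideanSpace ℝ (Fin k)) = k := finrank_euclideanSpace_fin
  have hball : ∀ (x : EuclideanSpace ℝ (Fin k)) (r : ℝ), 0 ≤ r →
      volume (ball x r) = ENNReal.ofReal (r ^ k) * volume (ball (0:EuclideanSpace ℝ (Fin k)) 1) := by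
    intro x r hr
    rw [Measure.addHaar_ball volume x hr, hrank]
  have hle : (T.card : ℝ≥0∞) * ENNReal.ofReal ((a/2) ^ k) * volume (ball (0:EuclideanSpace ℝ (Fin k)) 1)
      ≤ ENNReal.ofReal ((1 + a/2) ^ k) * volume (ball (0:EuclideanSpace ℝ (Fin k)) 1) := by
    rw [mul_assoc]
    calc (T.card : ℝ≥0∞) * (ENNReal.ofReal ((a/2) ^ k) * volume (ball (0:EuclideanSpace ℝ (Fin k)) 1))
        = ∑ q ∈ T, volume (ball q (a/2)) := by
          rw [Finset.sum_congr rfl (fun q _ => hball q (a/2) (by linarith))]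
          simp [Finset.sum_const, nsmul_eq_mul]
      _ = volume (⋃ q ∈ T, ball q (a/2)) := (measure_biUnion_finset hdisj hmeas).symm
      _ ≤ volume (ball (0:EuclideanSpace ℝ (Fin k)) (1 + a/2)) := measure_mono hsub
      _ = _ := hball 0 (1 + a/2) (by linarith)
  have hvpos : volume (ball (0:EuclideanSpace ℝ (Fin k)) 1) ≠ 0 := (measure_ball_pos _ _ one_pos).ne'
  have hvtop : volume (ball (0:EuclideanSpace ℝ (Fin k)) 1) ≠ ⊤ := measure_ball_lt_top.ne
  have hle2 : (T.card : ℝ≥0∞) * ENNReal.ofReal ((a/2) ^ k) ≤ ENNReal.ofReal ((1 + a/2) ^ k) :=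
    (ENNReal.mul_le_mul_iff_left hvpos hvtop).mp hle
  have hak : (0:ℝ) < (a/2) ^ k := by positivity
  have hle3 : (T.card : ℝ) * (a/2) ^ k ≤ (1 + a/2) ^ k := by
    rw [← ENNReal.ofReal_natCast, ← ENNReal.ofReal_mul (by positivity)] at hle2
    exact (ENNReal.ofReal_le_ofReal_iff (by positivity)).mp hle2
  have : (T.card : ℝ) ≤ (1 + a/2) ^ k / (a/2) ^ k := by
    rw [le_div_iff₀ hak]; exact hle3
  refine this.trans ?_
  rw [div_le_iff₀ hak, ← mul_pow]
  apply pow_le_pow_left₀ (by linarith)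
  rw [div_mul_div_comm, le_div_iff₀ (by positivity)]
  nlinarith

lemma jl_net_euclid (k : ℕ) (a : ℝ) (ha : 0 < a) (ha1 : a ≤ 1) :
    ∃ T : Finset (EuclideanSpace ℝ (Fin k)),
      (T.card : ℝ) ≤ (3/a)^k ∧ (∀ q ∈ T, ‖q‖ = 1) ∧
      ∀ x : EuclideanSpace ℝ (Fin k), ‖x‖ = 1 → ∃ q ∈ T, ‖x - q‖ ≤ a := by
  set C : Set ℕ := {n : ℕ | ∃ T : Finset (EuclideanSpace ℝ (Fin k)), T.card = n ∧
      (∀ q ∈ T, ‖q‖ = 1) ∧ (∀ q ∈ T, ∀ q' ∈ T, q ≠ q' → a < dist q q')} with hC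
  have hmem : ∀ n ∈ C, (n : ℝ) ≤ (3/a)^k := by
    rintro n ⟨T, rfl, hT1, hT2⟩
    exact jl_packing k a ha ha1 T (fun q hq => le_of_eq (hT1 q hq)) hT2
  have hbdd : BddAbove C := by
    refine ⟨⌈(3/a)^k⌉₊, fun n hn => ?_⟩
    exact_mod_cast (hmem n hn).trans (Nat.le_ceil _)
  have h0 : 0 ∈ C := ⟨∅, by simp⟩
  obtain ⟨T, hcard, hT1, hT2⟩ := Nat.sSup_mem ⟨0, h0⟩ hbdd
  classical
  refine ⟨T, hmem T.card ⟨T, rfl, hT1, hT2⟩, hT1, ?_⟩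
  · intro x hx
    by_contra hcon
    push_neg at hcon
    have hxT : x ∉ T := fun hxT => by have := hcon x hxT; simp at this; linarith
    have hnew : (T.card + 1) ∈ C := by
      refine ⟨insert x T, by rw [Finset.card_insert_of_notMem hxT], ?_, ?_⟩
      · intro q hq
        rcases Finset.mem_insert.mp hq with rfl | hq
        · exact hx
        · exact hT1 q hq
      · intro q hq q' hq' hne
        rcases Finset.mem_insert.mp hq with h1 | h1 <;>
          rcases Finset.mem_insert.mp hq' with h2 | h2
        · exact absurd (h1.trans h2.symm) hne
        · subst h1; rw [dist_eq_norm]; exact hcon q' h2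
        · subst h2; rw [dist_comm, dist_eq_norm]; exact hcon q h1
        · exact hT2 q h1 q' h2 hne
    have := le_csSup hbdd hnew
    omega

lemma jl_net (E' : Type*) [NormedAddCommGroup E'] [InnerProductSpace ℝ E']
    [FiniteDimensional ℝ E'] {k : ℕ} (hk : Module.finrank ℝ E' = k)
    (a : ℝ) (ha : 0 < a) (ha1 : a ≤ 1) :
    ∃ T : Finset E', (T.card : ℝ) ≤ (3/a)^k ∧ (∀ q ∈ T, ‖q‖ = 1) ∧
      ∀ x : E', ‖x‖ = 1 → ∃ q ∈ T, ‖x - q‖ ≤ a := by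
  classical
  subst hk
  set φ := (stdOrthonormalBasis ℝ E').repr
  obtain ⟨T₀, hcard, hT1, hT2⟩ := jl_net_euclid (Module.finrank ℝ E') a ha ha1
  refine ⟨T₀.image φ.symm, ?_, ?_, ?_⟩
  · exact le_trans (by exact_mod_cast Nat.cast_le.mpr (Finset.card_image_le)) hcard
  · intro q hq
    obtain ⟨q₀, hq₀, rfl⟩ := Finset.mem_image.mp hq
    rw [φ.symm.norm_map]; exact hT1 q₀ hq₀
  · intro x hx
    obtain ⟨q₀, hq₀, hd⟩ := hT2 (φ x) (by rw [φ.norm_map]; exact hx)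
    refine ⟨φ.symm q₀, Finset.mem_image_of_mem _ hq₀, ?_⟩
    have : x - φ.symm q₀ = φ.symm (φ x - q₀) := by
      rw [map_sub, φ.symm_apply_apply]
    rw [this, φ.symm.norm_map]; exact hd


lemma jl_sqrt2_facts : Real.sqrt 2 ^ 2 = 2 ∧ (1.41:ℝ) ≤ Real.sqrt 2 ∧ Real.sqrt 2 ≤ 1.42 := by
  have h : Real.sqrt 2 ^ 2 = 2 := Real.sq_sqrt (by norm_num)
  have h0 : (0:ℝ) ≤ Real.sqrt 2 := Real.sqrt_nonneg _
  refine ⟨h, ?_, ?_⟩ <;> nlinarith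

lemma jl_numA (ε : ℝ) (h0 : 0 < ε) (h1 : ε < 1) :
    Real.sqrt (1 + ε / Real.sqrt 2) ≤ Real.sqrt (1 + ε) * (1 - ε/14) := by
  obtain ⟨hs2, hs1, hs3⟩ := jl_sqrt2_facts
  have hs0 : (0:ℝ) < Real.sqrt 2 := by linarith
  set s := Real.sqrt 2
  have hds : ε / s = ε * s / 2 := by
    field_simp; nlinarith
  have hw : Real.sqrt (1 + ε / s) ^ 2 = 1 + ε * s / 2 := by
    rw [Real.sq_sqrt (by positivity), hds]
  have ht : Real.sqrt (1 + ε) ^ 2 = 1 + ε := Real.sq_sqrt (by linarith)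
  have hw0 : 0 ≤ Real.sqrt (1 + ε / s) := Real.sqrt_nonneg _
  have ht0 : 0 ≤ Real.sqrt (1 + ε) := Real.sqrt_nonneg _
  have ht1 : 1 ≤ Real.sqrt (1 + ε) := by nlinarith
  have hkey : 1 + ε / s ≤ (Real.sqrt (1 + ε) * (1 - ε/14)) ^ 2 := by
    rw [mul_pow, ht, hds]
    nlinarith [mul_pos h0 (sub_pos.mpr h1), sq_nonneg ε]
  calc Real.sqrt (1 + ε / s) ≤ Real.sqrt ((Real.sqrt (1 + ε) * (1 - ε/14)) ^ 2) :=
        Real.sqrt_le_sqrt hkey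
    _ = Real.sqrt (1 + ε) * (1 - ε/14) := Real.sqrt_sq (mul_nonneg ht0 (by linarith))

lemma jl_numB (ε : ℝ) (h0 : 0 < ε) (h1 : ε < 1) :
    Real.sqrt (1 - ε) ≤ Real.sqrt (1 - ε / Real.sqrt 2)
      - (Real.sqrt (1 + ε / Real.sqrt 2) / (1 - ε/14)) * (ε/14) := by
  obtain ⟨hs2, hs1, hs3⟩ := jl_sqrt2_facts
  have hs0 : (0:ℝ) < Real.sqrt 2 := by linarith
  set s := Real.sqrt 2
  have hds : ε / s = ε * s / 2 := by field_simp; nlinarith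
  have h14 : (0:ℝ) < 1 - ε/14 := by linarith
  have hes : ε / s < 1 := by rw [hds]; nlinarith
  have hu : Real.sqrt (1 - ε / s) ^ 2 = 1 - ε * s / 2 := by
    rw [Real.sq_sqrt (by linarith), hds]
  have hv : Real.sqrt (1 - ε) ^ 2 = 1 - ε := Real.sq_sqrt (by linarith)
  have hw : Real.sqrt (1 + ε / s) ^ 2 = 1 + ε * s / 2 := by
    rw [Real.sq_sqrt (by positivity), hds]
  have hu0 : 0 ≤ Real.sqrt (1 - ε / s) := Real.sqrt_nonneg _
  have hv0 : 0 ≤ Real.sqrt (1 - ε) := Real.sqrt_nonneg _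
  have hw0 : 0 ≤ Real.sqrt (1 + ε / s) := Real.sqrt_nonneg _
  set u := Real.sqrt (1 - ε / s)
  set v := Real.sqrt (1 - ε)
  set w := Real.sqrt (1 + ε / s)
  have hu1 : u ≤ 1 := by nlinarith
  have hv1 : v ≤ 1 := by nlinarith
  have hw2 : w ≤ 1.42 := by nlinarith
  have huv : (u - v) * (u + v) = ε - ε * s / 2 := by linear_combination hu - hv
  have huv0 : v ≤ u := by nlinarith
  have key : ε * (1 - s/2) / 2 ≤ u - v := by
    nlinarith [mul_nonneg (sub_nonneg.mpr huv0) (by linarith : (0:ℝ) ≤ 2 - (u + v))]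
  rw [div_mul_eq_mul_div, le_sub_iff_add_le, add_comm, ← le_sub_iff_add_le,
    div_le_iff₀ h14]
  have c1 : (0:ℝ) ≤ 1 - ε/14 := by linarith
  have c2 : ε * (1 - s/2) / 2 * (1 - ε/14) ≤ (u - v) * (1 - ε/14) :=
    mul_le_mul_of_nonneg_right key c1
  have c3 : w * (ε/14) ≤ 1.42 * (ε/14) := mul_le_mul_of_nonneg_right hw2 (by positivity)
  have c4 : 1.42 * (ε/14) ≤ ε * (1 - s/2) / 2 * (1 - ε/14) := by
    nlinarith [mul_pos h0 h0, mul_pos (mul_pos h0 h0) h0]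
  linarith


lemma jl_extension {n m' : ℕ} (ε : ℝ) (hε0 : 0 < ε) (hε1 : ε < 1)
    (𝒳' : Submodule ℝ (EuclideanSpace ℝ (Fin n)))
    (M : EuclideanSpace ℝ (Fin n) →ₗ[ℝ] EuclideanSpace ℝ (Fin m'))
    (T : Finset 𝒳')
    (hnet : ∀ x : 𝒳', ‖x‖ = 1 → ∃ q ∈ T, ‖x - q‖ ≤ ε/14)
    (hq : ∀ q ∈ T, |‖M (q : EuclideanSpace ℝ (Fin n))‖^2 - 1| ≤ ε / Real.sqrt 2) :
    ∀ x : 𝒳', Real.sqrt (1-ε) * ‖x‖ ≤ ‖M (x : EuclideanSpace ℝ (Fin n))‖ ∧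
      ‖M (x : EuclideanSpace ℝ (Fin n))‖ ≤ Real.sqrt (1+ε) * ‖x‖ := by
  classical
  have hs0 : (0:ℝ) < Real.sqrt 2 := Real.sqrt_pos.mpr (by norm_num)
  have hs1 : (1:ℝ) < Real.sqrt 2 := by
    nlinarith [Real.sq_sqrt (by norm_num : (2:ℝ) ≥ 0), Real.sqrt_nonneg 2]
  have hes : ε / Real.sqrt 2 < 1 := by
    rw [div_lt_one hs0]; linarith
  have hes0 : 0 < ε / Real.sqrt 2 := by positivity
  set a : ℝ := ε / 14 with ha_def
  have ha0 : 0 < a := by positivity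
  have ha1 : a < 1 := by rw [ha_def]; linarith
  set w := Real.sqrt (1 + ε / Real.sqrt 2) with hw_def
  set u := Real.sqrt (1 - ε / Real.sqrt 2) with hu_def
  set v := Real.sqrt (1 - ε) with hv_def
  have hw0 : 0 ≤ w := Real.sqrt_nonneg _
  set Tc : 𝒳' →L[ℝ] EuclideanSpace ℝ (Fin m') :=
    LinearMap.toContinuousLinearMap (M.comp 𝒳'.subtype) with hTc_def
  have hTcq : ∀ z : 𝒳', Tc z = M (z : EuclideanSpace ℝ (Fin n)) := fun z => rfl
  set C := ‖Tc‖ with hC_def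
  have hC0 : 0 ≤ C := hC_def ▸ norm_nonneg Tc
  -- norms on net points
  have hqup : ∀ q ∈ T, ‖Tc q‖ ≤ w := by
    intro q hqT
    have h := abs_le.mp (hq q hqT)
    rw [hTcq]
    have : ‖M (q : EuclideanSpace ℝ (Fin n))‖^2 ≤ 1 + ε / Real.sqrt 2 := by linarith [h.2]
    calc ‖M (q : EuclideanSpace ℝ (Fin n))‖
        = Real.sqrt (‖M (q : EuclideanSpace ℝ (Fin n))‖^2) := (Real.sqrt_sq (norm_nonneg _)).symm
      _ ≤ w := Real.sqrt_le_sqrt this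
  have hqlo : ∀ q ∈ T, u ≤ ‖Tc q‖ := by
    intro q hqT
    have h := abs_le.mp (hq q hqT)
    rw [hTcq]
    calc u ≤ Real.sqrt (‖M (q : EuclideanSpace ℝ (Fin n))‖^2) := Real.sqrt_le_sqrt (by linarith [h.1])
      _ = _ := Real.sqrt_sq (norm_nonneg _)
  -- bound on operator norm
  have hCb : C ≤ w + C * a := by
    apply ContinuousLinearMap.opNorm_le_of_unit_norm (by positivity)
    intro z hz
    obtain ⟨q, hqT, hd⟩ := hnet z hz
    calc ‖Tc z‖ = ‖Tc q + Tc (z - q)‖ := by rw [← map_add, add_sub_cancel]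
      _ ≤ ‖Tc q‖ + ‖Tc (z - q)‖ := norm_add_le _ _
      _ ≤ w + C * a := by
          gcongr
          · exact hqup q hqT
          · calc ‖Tc (z - q)‖ ≤ C * ‖z - q‖ := Tc.le_opNorm _
              _ ≤ C * a := mul_le_mul_of_nonneg_left hd hC0
  have hCle : C ≤ w / (1 - a) := by
    rw [le_div_iff₀ (by linarith)]
    nlinarith
  have hupper : ∀ x : 𝒳', ‖M (x : EuclideanSpace ℝ (Fin n))‖ ≤ Real.sqrt (1+ε) * ‖x‖ := by
    intro x
    have h1 : w / (1 - a) ≤ Real.sqrt (1+ε) := by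
      rw [div_le_iff₀ (by linarith)]
      exact jl_numA ε hε0 hε1
    calc ‖M (x : EuclideanSpace ℝ (Fin n))‖ = ‖Tc x‖ := by rw [hTcq]
      _ ≤ C * ‖x‖ := Tc.le_opNorm _
      _ ≤ Real.sqrt (1+ε) * ‖x‖ := by gcongr; exact hCle.trans h1
  have hlower_unit : ∀ z : 𝒳', ‖z‖ = 1 → v ≤ ‖Tc z‖ := by
    intro z hz
    obtain ⟨q, hqT, hd⟩ := hnet z hz
    have h1 : ‖Tc q‖ - ‖Tc z‖ ≤ ‖Tc (z - q)‖ := by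
      have h2 := norm_sub_norm_le (Tc q) (Tc z)
      rw [← map_sub] at h2
      calc ‖Tc q‖ - ‖Tc z‖ ≤ ‖Tc (q - z)‖ := h2
        _ = ‖Tc (z - q)‖ := by rw [← norm_neg, ← map_neg, neg_sub]
    have h3 : ‖Tc (z - q)‖ ≤ (w / (1 - a)) * a := by
      calc ‖Tc (z - q)‖ ≤ C * ‖z - q‖ := Tc.le_opNorm _
        _ ≤ (w / (1 - a)) * a := by
            exact mul_le_mul hCle hd (norm_nonneg _) (div_nonneg hw0 (by linarith))
    have h4 := jl_numB ε hε0 hε1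
    have h5 := hqlo q hqT
    rw [← hv_def, ← hu_def, ← hw_def, ← ha_def] at h4
    linarith
  intro x
  refine ⟨?_, hupper x⟩
  rcases eq_or_ne x 0 with rfl | hx0
  · simp
  have hxn : (0:ℝ) < ‖x‖ := norm_pos_iff.mpr hx0
  set z : 𝒳' := ‖x‖⁻¹ • x with hz_def
  have hz1 : ‖z‖ = 1 := by
    rw [hz_def, norm_smul, norm_inv, norm_norm, inv_mul_cancel₀ hxn.ne']
  have h6 := hlower_unit z hz1
  rw [hz_def, _root_.map_smul, norm_smul, norm_inv, norm_norm] at h6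
  rw [hTcq] at h6
  calc v * ‖x‖ ≤ (‖x‖⁻¹ * ‖M (x : EuclideanSpace ℝ (Fin n))‖) * ‖x‖ := by gcongr
    _ = ‖M (x : EuclideanSpace ℝ (Fin n))‖ := by
        rw [mul_comm (‖x‖⁻¹) _, mul_assoc, inv_mul_cancel₀ hxn.ne', mul_one]

open MeasureTheory
open scoped Matrix ENNReal

lemma jl_dot_nonneg {n : ℕ} (v : Fin n → ℝ) : 0 ≤ v ⬝ᵥ v :=
  Finset.sum_nonneg fun i _ => mul_self_nonneg (v i)

lemma jl_dot_norm {n : ℕ} (v : EuclideanSpace ℝ (Fin n)) :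
    Real.sqrt ((WithLp.equiv 2 (Fin n → ℝ)) v ⬝ᵥ (WithLp.equiv 2 (Fin n → ℝ)) v) = ‖v‖ := by
  rw [EuclideanSpace.norm_eq]
  congr 1
  exact Finset.sum_congr rfl fun i _ => by
    rw [Real.norm_eq_abs, sq_abs, sq]
    rfl

lemma jl_dot_eq_sq_norm {n : ℕ} (v : EuclideanSpace ℝ (Fin n)) :
    (WithLp.equiv 2 (Fin n → ℝ)) v ⬝ᵥ (WithLp.equiv 2 (Fin n → ℝ)) v = ‖v‖ ^ 2 := by
  rw [← jl_dot_norm v, Real.sq_sqrt (jl_dot_nonneg _)]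

theorem jl_subspace_embedding {m N k : ℕ}
    {Ω : Type*} [MeasurableSpace Ω] (μ : Measure Ω) [IsProbabilityMeasure μ]
    (Φ : Ω → Matrix (Fin m) (Fin N) ℝ)
    (f : ℝ → ℝ) (hf : ∀ e : ℝ, 0 < e → e < 1 → 0 < f e)
    (hJL : ∀ x : Fin N → ℝ, ∀ e : ℝ, 0 < e → e < 1 →
      μ {ω | |((Φ ω).mulVec x ⬝ᵥ (Φ ω).mulVec x) - x ⬝ᵥ x| > e * (x ⬝ᵥ x)} ≤
        ENNReal.ofReal (2 * Real.exp (-(m : ℝ) * f e)))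
    (𝒳 : Submodule ℝ (Fin N → ℝ)) (h𝒳 : Module.finrank ℝ 𝒳 = k)
    (ε δ : ℝ) (hε0 : 0 < ε) (hε1 : ε < 1) (hδ0 : 0 < δ) (hδ1 : δ < 1)
    (hm : (m : ℝ) ≥ ((k : ℝ) * Real.log (42 / ε) + Real.log (2 / δ)) /
      f (ε / Real.sqrt 2)) :
    ENNReal.ofReal (1 - δ) ≤
      μ {ω | ∀ x ∈ 𝒳,
        Real.sqrt (1 - ε) * Real.sqrt (x ⬝ᵥ x) ≤
            Real.sqrt ((Φ ω).mulVec x ⬝ᵥ (Φ ω).mulVec x) ∧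
          Real.sqrt ((Φ ω).mulVec x ⬝ᵥ (Φ ω).mulVec x) ≤
            Real.sqrt (1 + ε) * Real.sqrt (x ⬝ᵥ x)} := by
  classical
  have hs0 : (0:ℝ) < Real.sqrt 2 := Real.sqrt_pos.mpr (by norm_num)
  have hs1 : (1:ℝ) < Real.sqrt 2 := by
    nlinarith [Real.sq_sqrt (by norm_num : (0:ℝ) ≤ 2), Real.sqrt_nonneg 2]
  have hes0 : 0 < ε / Real.sqrt 2 := by positivity
  have hes : ε / Real.sqrt 2 < 1 := by
    rw [div_lt_one hs0]; linarith
  have hF : 0 < f (ε / Real.sqrt 2) := hf _ hes0 hes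
  -- transfer the subspace to Euclidean space
  set eN := WithLp.linearEquiv 2 ℝ (Fin N → ℝ) with heN
  set 𝒳' : Submodule ℝ (EuclideanSpace ℝ (Fin N)) := 𝒳.map eN.symm.toLinearMap with h𝒳'
  haveI : FiniteDimensional ℝ 𝒳' := by
    infer_instance
  have hrank' : Module.finrank ℝ 𝒳' = k := by
    rw [h𝒳', LinearEquiv.finrank_map_eq eN.symm 𝒳, h𝒳]
  -- the net
  have ha0 : 0 < ε / 14 := by linarith
  have ha1 : ε / 14 ≤ 1 := by linarith
  obtain ⟨T, hTcard, hT1, hT2⟩ := jl_net 𝒳' hrank' (ε/14) ha0 ha1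
  -- the random linear map
  set eM := WithLp.linearEquiv 2 ℝ (Fin m → ℝ) with heM
  set M : Ω → (EuclideanSpace ℝ (Fin N) →ₗ[ℝ] EuclideanSpace ℝ (Fin m)) := fun ω =>
    (eM.symm.toLinearMap.comp ((Φ ω).mulVecLin.comp eN.toLinearMap)) with hM
  have hMv : ∀ (ω : Ω) (v : EuclideanSpace ℝ (Fin N)),
      eM ((M ω) v) = (Φ ω).mulVec (eN v) := fun ω v => rfl
  -- bad events
  set Bad : 𝒳' → Set Ω := fun q =>
    {ω | |((Φ ω).mulVec (eN (q : EuclideanSpace ℝ (Fin N))) ⬝ᵥ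
            (Φ ω).mulVec (eN (q : EuclideanSpace ℝ (Fin N)))) -
          (eN (q : EuclideanSpace ℝ (Fin N)) ⬝ᵥ eN (q : EuclideanSpace ℝ (Fin N)))| >
        (ε / Real.sqrt 2) * (eN (q : EuclideanSpace ℝ (Fin N)) ⬝ᵥ
            eN (q : EuclideanSpace ℝ (Fin N)))} with hBad
  have hBadle : ∀ q : 𝒳',
      μ (Bad q) ≤ ENNReal.ofReal (2 * Real.exp (-(m:ℝ) * f (ε / Real.sqrt 2))) :=
    fun q => hJL _ _ hes0 hes
  -- the union bound numeric estimate
  have hcard : (T.card : ℝ) ≤ (42/ε)^k := by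
    refine hTcard.trans ?_
    have : 3 / (ε/14) = 42/ε := by field_simp; ring
    rw [this]
  have hkey : (T.card : ℝ) * (2 * Real.exp (-(m:ℝ) * f (ε / Real.sqrt 2))) ≤ δ := by
    set c : ℝ := 42/ε with hc
    have hc1 : (1:ℝ) < c := by
      rw [hc, lt_div_iff₀ hε0]; linarith
    have hck : (0:ℝ) < c ^ k := by positivity
    have hmf : (k:ℝ) * Real.log c + Real.log (2/δ) ≤ (m:ℝ) * f (ε / Real.sqrt 2) := by
      have := (div_le_iff₀ hF).mp hm
      linarith
    have hexp : Real.exp (-(m:ℝ) * f (ε / Real.sqrt 2)) ≤ (c^k)⁻¹ * (δ/2) := by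
      have h1 : Real.exp (-(m:ℝ) * f (ε / Real.sqrt 2)) ≤
          Real.exp (-((k:ℝ) * Real.log c + Real.log (2/δ))) := by
        apply Real.exp_le_exp.mpr; linarith
      have h2 : Real.exp (((k:ℝ) * Real.log c + Real.log (2/δ))) = c^k * (2/δ) := by
        rw [Real.exp_add, Real.exp_nat_mul, Real.exp_log (by linarith),
          Real.exp_log (by positivity)]
      rw [Real.exp_neg, h2] at h1
      refine h1.trans (le_of_eq ?_)
      rw [mul_inv]
      congr 1
      rw [inv_div]
    calc (T.card : ℝ) * (2 * Real.exp (-(m:ℝ) * f (ε / Real.sqrt 2)))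
        ≤ c^k * (2 * ((c^k)⁻¹ * (δ/2))) := by
          apply mul_le_mul hcard _ (by positivity) (by positivity)
          apply mul_le_mul_of_nonneg_left hexp (by norm_num)
      _ = δ := by field_simp
  -- measure of the union of bad events
  have hUnion : μ (⋃ q ∈ T, Bad q) ≤ ENNReal.ofReal δ := by
    calc μ (⋃ q ∈ T, Bad q) ≤ ∑ q ∈ T, μ (Bad q) := measure_biUnion_finset_le T Bad
      _ ≤ ∑ _q ∈ T, ENNReal.ofReal (2 * Real.exp (-(m:ℝ) * f (ε / Real.sqrt 2))) :=
          Finset.sum_le_sum fun q _ => hBadle q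
      _ = (T.card : ℝ≥0∞) * ENNReal.ofReal (2 * Real.exp (-(m:ℝ) * f (ε / Real.sqrt 2))) := by
          rw [Finset.sum_const, nsmul_eq_mul]
      _ = ENNReal.ofReal ((T.card : ℝ) * (2 * Real.exp (-(m:ℝ) * f (ε / Real.sqrt 2)))) := by
          rw [ENNReal.ofReal_mul (Nat.cast_nonneg _), ENNReal.ofReal_mul (by norm_num : (0:ℝ) ≤ 2), ENNReal.ofReal_natCast]
      _ ≤ ENNReal.ofReal δ := ENNReal.ofReal_le_ofReal hkey
  -- good set is contained in the event
  have hsub : (⋃ q ∈ T, Bad q)ᶜ ⊆ {ω | ∀ x ∈ 𝒳,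
        Real.sqrt (1 - ε) * Real.sqrt (x ⬝ᵥ x) ≤
            Real.sqrt ((Φ ω).mulVec x ⬝ᵥ (Φ ω).mulVec x) ∧
          Real.sqrt ((Φ ω).mulVec x ⬝ᵥ (Φ ω).mulVec x) ≤
            Real.sqrt (1 + ε) * Real.sqrt (x ⬝ᵥ x)} := by
    intro ω hω
    simp only [Set.compl_iUnion, Set.mem_iInter] at hω
    have hqbound : ∀ q ∈ T, |‖(M ω) (q : EuclideanSpace ℝ (Fin N))‖^2 - 1| ≤ ε / Real.sqrt 2 := by
      intro q hqT
      have h1 := hω q hqT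
      simp only [hBad, Set.mem_compl_iff, Set.mem_setOf_eq, not_lt] at h1
      have hq1 : eN (q : EuclideanSpace ℝ (Fin N)) ⬝ᵥ eN (q : EuclideanSpace ℝ (Fin N)) = 1 := by
        have := jl_dot_eq_sq_norm (q : EuclideanSpace ℝ (Fin N))
        rw [show ‖(q : EuclideanSpace ℝ (Fin N))‖ = 1 from hT1 q hqT] at this
        rw [one_pow] at this; exact this
      have hq2 : (Φ ω).mulVec (eN (q : EuclideanSpace ℝ (Fin N))) ⬝ᵥ
          (Φ ω).mulVec (eN (q : EuclideanSpace ℝ (Fin N))) =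
          ‖(M ω) (q : EuclideanSpace ℝ (Fin N))‖^2 := by
        rw [← jl_dot_eq_sq_norm ((M ω) (q : EuclideanSpace ℝ (Fin N)))]
        rfl
      rw [hq1, mul_one, hq2] at h1
      exact h1
    have hext := jl_extension ε hε0 hε1 𝒳' (M ω) T hT2 hqbound
    intro x hx
    have hxmem : eN.symm x ∈ 𝒳' := Submodule.mem_map_of_mem hx
    have h2 := hext ⟨eN.symm x, hxmem⟩
    have hxe : Real.sqrt (x ⬝ᵥ x) = ‖(⟨eN.symm x, hxmem⟩ : 𝒳')‖ :=
      jl_dot_norm (eN.symm x)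
    have hMe : Real.sqrt ((Φ ω).mulVec x ⬝ᵥ (Φ ω).mulVec x) =
        ‖(M ω) ((⟨eN.symm x, hxmem⟩ : 𝒳') : EuclideanSpace ℝ (Fin N))‖ := by
      exact jl_dot_norm ((M ω) (eN.symm x))
    rw [hxe, hMe]
    exact ⟨h2.1, h2.2⟩
  -- conclude
  have h1 : (1:ℝ≥0∞) ≤ μ (⋃ q ∈ T, Bad q) + μ ((⋃ q ∈ T, Bad q)ᶜ) := by
    rw [← measure_univ (μ := μ), ← Set.union_compl_self (⋃ q ∈ T, Bad q)]
    exact measure_union_le _ _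
  have h2 : ENNReal.ofReal (1 - δ) ≤ μ ((⋃ q ∈ T, Bad q)ᶜ) := by
    rw [ENNReal.ofReal_sub 1 hδ0.le, ENNReal.ofReal_one]
    rw [tsub_le_iff_right]
    calc (1:ℝ≥0∞) ≤ μ (⋃ q ∈ T, Bad q) + μ ((⋃ q ∈ T, Bad q)ᶜ) := h1
      _ ≤ ENNReal.ofReal δ + μ ((⋃ q ∈ T, Bad q)ᶜ) := by gcongr
      _ = μ ((⋃ q ∈ T, Bad q)ᶜ) + ENNReal.ofReal δ := by rw [add_comm]
  exact h2.trans (measure_mono hsub)
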